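/- Let p ≥ 5 be a prime with [K(ζ_p):K] = 2 for a number field K, and let 𝔭 be a prime of K above p with ramification index e over ℚ. Then (p-1)/2 divides e. In particular, if e ∈ {2, 3} then either p = 5 and e = 2, or p = 7 and e = 3; and p ≥ 11 forces e ≥ 5. -/

import Mathlib

open NumberField
open scoped NumberField

open Finset in
lemma assoc_sub_one_of_primitive {R : Type*} [CommRing R] [IsDomain R] {p : ℕ}
    (hp : p.Prime) {ζ : R} (hζ : IsPrimitiveRoot ζ p) {j : ℕ} (hj0 : 0 < j) (hjp : j < p) :
    Associated (ζ ^ j - 1) (ζ - 1) := by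
  refine associated_of_dvd_dvd ?_ ?_
  · have hcop : Nat.Coprime p j := (Nat.Prime.coprime_iff_not_dvd hp).2
      (fun h => absurd (Nat.le_of_dvd hj0 h) (not_le.2 hjp))
    obtain ⟨i, -, hi⟩ := Nat.exists_mul_mod_eq_one_of_coprime hcop.symm hp.one_lt
    have hz : (ζ ^ j) ^ i = ζ := by
      rw [← pow_mul, ← Nat.mod_add_div (j * i) p, pow_add, pow_mul, hζ.pow_eq_one, one_pow,
        mul_one, hi, pow_one]
    calc ζ ^ j - 1 ∣ (ζ ^ j) ^ i - 1 ^ i := sub_dvd_pow_sub_pow _ _ _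
    _ = ζ - 1 := by rw [hz, one_pow]
  · have := sub_dvd_pow_sub_pow ζ 1 j
    rwa [one_pow] at this

open Finset in
lemma assoc_p_pow {R : Type*} [CommRing R] [IsDomain R] {p : ℕ}
    (hp : p.Prime) {ζ : R} (hζ : IsPrimitiveRoot ζ p) :
    Associated ((p : R)) ((ζ - 1) ^ (p - 1)) := by
  obtain ⟨n, hn⟩ : ∃ n, p = n + 1 := ⟨p - 1, (Nat.succ_pred_eq_of_pos hp.pos).symm⟩
  subst hn
  have hζ' : IsPrimitiveRoot ζ (n + 1) := hζ
  have hprod := hζ'.prod_one_sub_pow_eq_order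
  have hassoc : Associated (∏ k ∈ range n, (1 - ζ ^ (k + 1))) (∏ _k ∈ range n, (ζ - 1)) := by
    refine Associated.prod _ _ _ (fun i hi => ?_)
    have h1 : Associated (ζ ^ (i + 1) - 1) (ζ - 1) :=
      assoc_sub_one_of_primitive hp hζ (Nat.succ_pos i) (by simpa using mem_range.1 hi)
    simpa [neg_sub] using h1.neg_left
  rw [prod_const, card_range] at hassoc
  have : ((n : R) + 1) = ((n + 1 : ℕ) : R) := by push_cast; ring
  rw [hprod, this] at hassoc
  simpa using hassoc

theorem stmt_19 (p : ℕ) [hp : Fact p.Prime] (hp5 : 5 ≤ p)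
    (K : Type) [Field K] [NumberField K]
    (L : Type) [Field L] [Algebra K L]
    [IsCyclotomicExtension {p} K L]
    (hdeg : Module.finrank K L = 2)
    (𝔭 : Ideal (𝓞 K)) (hprime : 𝔭.IsPrime) (hbot : 𝔭 ≠ ⊥)
    (hover : (p : 𝓞 K) ∈ 𝔭)
    (e : ℕ)
    (he : e = Ideal.ramificationIdx' (Ideal.span {(p : ℤ)}) 𝔭) :
    (p - 1) / 2 ∣ e ∧
    ((e = 2 ∨ e = 3) → ((p = 5 ∧ e = 2) ∨ (p = 7 ∧ e = 3))) ∧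
    (11 ≤ p → 5 ≤ e) := by
  classical
  haveI := hprime
  have hpp := hp.out
  set q : ℕ+ := ⟨p, hp.out.pos⟩ with hq
  haveI : FiniteDimensional K L := IsCyclotomicExtension.finite {p} K L
  haveI : NumberField L := NumberField.of_module_finite K L
  -- primitive p-th root of unity in 𝓞 L
  haveI : NeZero p := ⟨hpp.ne_zero⟩
  have hζ := IsCyclotomicExtension.zeta_spec p K L
  have hζO : IsPrimitiveRoot hζ.toInteger p := hζ.toInteger_isPrimitiveRoot
  set x : 𝓞 L := hζ.toInteger - 1 with hx
  have hassoc : Associated ((p : 𝓞 L)) (x ^ (p - 1)) := assoc_p_pow hpp hζO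
  have hxne : x ≠ 0 := by
    rw [hx, sub_ne_zero]
    exact hζO.ne_one hpp.one_lt
  -- choose a prime 𝔓 of 𝓞 L above 𝔭
  obtain ⟨𝔓, -, h𝔓prime, h𝔓comap⟩ :=
    Ideal.exists_ideal_over_prime_of_isIntegral 𝔭 (⊥ : Ideal (𝓞 L))
      (by rw [← RingHom.ker_eq_comap_bot, NumberField.RingOfIntegers.ker_algebraMap_eq_bot]; exact bot_le)
  haveI := h𝔓prime
  have hinj : Function.Injective (algebraMap (𝓞 K) (𝓞 L)) := NumberField.RingOfIntegers.algebraMap.injective K L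
  have h𝔓bot : 𝔓 ≠ ⊥ := by
    rintro rfl
    rw [← RingHom.ker_eq_comap_bot, NumberField.RingOfIntegers.ker_algebraMap_eq_bot] at h𝔓comap
    exact hbot h𝔓comap.symm
  have hg : Ideal.map (algebraMap (𝓞 K) (𝓞 L)) 𝔭 ≤ 𝔓 :=
    Ideal.map_le_iff_le_comap.mpr (le_of_eq h𝔓comap.symm)
  have hg0 : Ideal.map (algebraMap (𝓞 K) (𝓞 L)) 𝔭 ≠ ⊥ := by
    intro h
    apply hbot
    rw [eq_bot_iff]
    intro a ha
    have hma := Ideal.mem_map_of_mem (algebraMap (𝓞 K) (𝓞 L)) ha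
    rw [h, Ideal.mem_bot] at hma
    have ha0 : a = 0 := hinj (by simpa using hma)
    simp [Ideal.mem_bot, ha0]
  -- the map of (p) to 𝓞 L is (x)^(p-1)
  have hmapL : Ideal.map (algebraMap ℤ (𝓞 L)) (Ideal.span {(p : ℤ)})
      = Ideal.span {x} ^ (p - 1) := by
    rw [Ideal.map_span, Set.image_singleton, map_natCast, Ideal.span_singleton_pow]
    exact Ideal.span_singleton_eq_span_singleton.mpr (by exact_mod_cast hassoc)
  have hmapbot : Ideal.map (algebraMap ℤ (𝓞 L)) (Ideal.span {(p : ℤ)}) ≠ ⊥ := by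
    rw [hmapL, ← Ideal.zero_eq_bot]
    exact pow_ne_zero _ (by simpa [Ideal.zero_eq_bot, Ideal.span_singleton_eq_bot] using hxne)
  set E := Ideal.ramificationIdx' (Ideal.span {(p : ℤ)}) 𝔓 with hE
  -- (p-1) divides E
  have hpE : (p - 1) ∣ E := by
    rw [hE, Ideal.IsDedekindDomain.ramificationIdx'_eq_normalizedFactors_count hmapbot h𝔓prime h𝔓bot,
      hmapL, UniqueFactorizationMonoid.normalizedFactors_pow, Multiset.count_nsmul]
    exact Dvd.intro _ rfl
  -- tower multiplicativity : E = e * e₂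
  set e₂ := Ideal.ramificationIdx' 𝔭 𝔓 with he₂
  have hcomp : (algebraMap (𝓞 K) (𝓞 L)).comp (algebraMap ℤ (𝓞 K)) = algebraMap ℤ (𝓞 L) := by
    apply RingHom.ext_int
  have hmul : E = e * e₂ := by
    rw [hE, he, he₂]
    exact Ideal.ramificationIdx'_algebra_tower hg0 hmapbot hg
  -- e ≠ 0
  have hmapK : Ideal.map (algebraMap ℤ (𝓞 K)) (Ideal.span {(p : ℤ)}) ≤ 𝔭 := by
    rw [Ideal.map_span, Set.image_singleton, map_natCast, Ideal.span_le]
    simpa using hover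
  have hmapKbot : Ideal.map (algebraMap ℤ (𝓞 K)) (Ideal.span {(p : ℤ)}) ≠ ⊥ := by
    rw [Ideal.map_span, Set.image_singleton, map_natCast, ← Ideal.zero_eq_bot]
    simpa [Ideal.zero_eq_bot, Ideal.span_singleton_eq_bot] using
      (Nat.cast_ne_zero (R := 𝓞 K)).2 hpp.ne_zero
  have hene : e ≠ 0 := by
    rw [he]
    exact Ideal.IsDedekindDomain.ramificationIdx'_ne_zero hmapKbot hprime hmapK
  have he₂ne : e₂ ≠ 0 :=
    Ideal.IsDedekindDomain.ramificationIdx'_ne_zero hg0 h𝔓prime hg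
  -- e₂ ≤ 2 via the fundamental identity
  haveI h𝔭max : 𝔭.IsMaximal := Ideal.IsPrime.isMaximal hprime hbot
  haveI : Module.Finite (𝓞 K) (𝓞 L) := Module.Finite.of_restrictScalars_finite ℤ _ _
  haveI : 𝔓.LiesOver 𝔭 := ⟨h𝔓comap.symm⟩
  have hf₂ : 0 < Ideal.inertiaDeg' 𝔭 𝔓 := Ideal.inertiaDeg'_pos 𝔭 𝔓
  have h𝔓mem : 𝔓 ∈ (UniqueFactorizationMonoid.factors
      (Ideal.map (algebraMap (𝓞 K) (𝓞 L)) 𝔭)).toFinset := by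
    rw [Multiset.mem_toFinset, UniqueFactorizationMonoid.factors_eq_normalizedFactors,
      Ideal.mem_normalizedFactors_iff hg0]
    exact ⟨h𝔓prime, hg⟩
  have hsum := Ideal.sum_ramification_inertia (𝓞 L) K L hbot
  rw [hdeg] at hsum
  have hle : e₂ * Ideal.inertiaDeg' 𝔭 𝔓 ≤ 2 := by
    rw [← hsum]
    exact Finset.single_le_sum (f := fun P => Ideal.ramificationIdx' 𝔭 P *
      Ideal.inertiaDeg' 𝔭 P) (fun _ _ => Nat.zero_le _) h𝔓mem
  have he₂le : e₂ ≤ 2 := le_trans (Nat.le_mul_of_pos_right _ hf₂) hle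
  have he₂dvd : e₂ ∣ 2 := by
    have h12 : e₂ = 1 ∨ e₂ = 2 := by omega
    rcases h12 with h | h
    · exact h ▸ one_dvd _
    · exact h ▸ dvd_refl _
  -- p - 1 ∣ 2 * e
  have h2e : (p - 1) ∣ 2 * e := by
    refine hpE.trans ?_
    rw [hmul, mul_comm 2 e]
    exact mul_dvd_mul_left e he₂dvd
  have h2 : 2 ∣ p - 1 := by
    have : Odd p := hpp.odd_of_ne_two (by omega)
    obtain ⟨k, hk⟩ := this
    omega
  have hdvd : (p - 1) / 2 ∣ e := by
    obtain ⟨c, hc⟩ := h2e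
    obtain ⟨d, hd⟩ := h2
    refine ⟨c, ?_⟩
    rw [hd, Nat.mul_div_cancel_left d (by norm_num)]
    have h2ec : 2 * e = 2 * (d * c) := by rw [hc, hd, mul_assoc]
    exact Nat.eq_of_mul_eq_mul_left (by norm_num) h2ec
  refine ⟨hdvd, ?_, ?_⟩
  · rintro (rfl | rfl)
    · left
      refine ⟨?_, rfl⟩
      have h1 := Nat.le_of_dvd (by norm_num) hdvd
      omega
    · right
      refine ⟨?_, rfl⟩
      have h1 := Nat.le_of_dvd (by norm_num) hdvd
      have h2' : (p - 1) / 2 ≠ 2 := by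
        intro h
        rw [h] at hdvd
        omega
      omega
  · intro hp11
    have h5 : 5 ≤ (p - 1) / 2 := by omega
    exact le_trans h5 (Nat.le_of_dvd (Nat.pos_of_ne_zero hene) hdvd)
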